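/- Let λ₁ ≥ λ₂ ≥ … ≥ λ_p ≥ 0 with λ_q > 0 and λ_{q+1} = … = λ_p = 0 for some 1 ≤ q < p, and let λ̂₁,…,λ̂_p be estimates with max_i |λ̂ᵢ − λᵢ| = O_p(n^{-1/2}). Define q̂ = argmin_{1≤i≤p} (λ̂²_{i+1} + c_n)/(λ̂²_i + c_n) with λ̂_{p+1} = 0 and c_n = log n / n. Then P(q̂ = q) → 1 as n → ∞ (with p, q, and the λᵢ fixed). -/

import Mathlib

open MeasureTheory Filter ENNReal Topology

lemma ratio_key {p q : ℕ} (hqp : q < p) (hq1 : 1 ≤ q)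
    (lam : Fin (p + 1) → ℝ)
    (hmono : ∀ i j : Fin (p + 1), i ≤ j → lam j ≤ lam i)
    (hqpos : 0 < lam ⟨q - 1, by omega⟩)
    (hzero : ∀ i : Fin (p + 1), q ≤ (i : ℕ) → lam i = 0)
    (x : Fin (p + 1) → ℝ) (c δ : ℝ)
    (hc : 0 < c) (hc1 : c ≤ 1) (hδ0 : 0 ≤ δ)
    (hδa : δ ≤ lam ⟨q - 1, by omega⟩ / 2)
    (hx : ∀ i, |x i - lam i| ≤ δ)
    (hU1 : (δ ^ 2 + c) / (lam ⟨q - 1, by omega⟩ ^ 2 / 4)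
        < (lam ⟨q - 1, by omega⟩ ^ 2 / 4) /
          ((lam ⟨0, by omega⟩ + lam ⟨q - 1, by omega⟩) ^ 2 + 1))
    (hU2 : (δ ^ 2 + c) ^ 2 < c * (lam ⟨q - 1, by omega⟩ ^ 2 / 4)) :
    ∀ i : Fin p, i ≠ (⟨q - 1, by omega⟩ : Fin p) →
      ((x (Fin.succ (⟨q - 1, by omega⟩ : Fin p))) ^ 2 + c) /
          ((x (Fin.castSucc (⟨q - 1, by omega⟩ : Fin p))) ^ 2 + c)
        < ((x (Fin.succ i)) ^ 2 + c) / ((x (Fin.castSucc i)) ^ 2 + c) := by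
  set a := lam ⟨q - 1, by omega⟩ with ha_def
  set L := lam ⟨0, by omega⟩ + a with hL_def
  have ha : 0 < a := hqpos
  have hlow : ∀ j : Fin (p + 1), (j : ℕ) ≤ q - 1 → a / 2 ≤ x j := by
    intro j hj
    have h1 : a ≤ lam j := hmono j ⟨q - 1, by omega⟩ (by simp [Fin.le_def]; omega)
    have h2 := abs_le.1 (hx j)
    linarith [h2.1]
  have hhigh : ∀ j : Fin (p + 1), x j ≤ L := by
    intro j
    have h1 : lam j ≤ lam ⟨0, by omega⟩ := hmono ⟨0, by omega⟩ j (by simp [Fin.le_def])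
    have h2 := abs_le.1 (hx j)
    linarith [h2.2]
  have hsmall : ∀ j : Fin (p + 1), q ≤ (j : ℕ) → x j ^ 2 ≤ δ ^ 2 := by
    intro j hj
    have hz : lam j = 0 := hzero j hj
    have h2 := hx j
    rw [hz, sub_zero] at h2
    nlinarith [abs_nonneg (x j), sq_abs (x j)]
  have hsq_low : ∀ j : Fin (p + 1), (j : ℕ) ≤ q - 1 → a ^ 2 / 4 ≤ x j ^ 2 := by
    intro j hj; nlinarith [hlow j hj]
  have hsq_high : ∀ j : Fin (p + 1), (j : ℕ) ≤ q - 1 → x j ^ 2 ≤ L ^ 2 := by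
    intro j hj; nlinarith [hlow j hj, hhigh j]
  -- indices of the reference ratio
  have hvsucc : ((Fin.succ (⟨q - 1, by omega⟩ : Fin p)) : ℕ) = q := by
    simp [Fin.val_succ]; omega
  have hvcast : ((Fin.castSucc (⟨q - 1, by omega⟩ : Fin p)) : ℕ) = q - 1 := by
    simp
  have hnum : x (Fin.succ (⟨q - 1, by omega⟩ : Fin p)) ^ 2 ≤ δ ^ 2 :=
    hsmall _ (by omega)
  have hden : a ^ 2 / 4 ≤ x (Fin.castSucc (⟨q - 1, by omega⟩ : Fin p)) ^ 2 :=
    hsq_low _ (by omega)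
  have hQ4 : (0:ℝ) < a ^ 2 / 4 := by positivity
  have hRstar : (x (Fin.succ (⟨q - 1, by omega⟩ : Fin p)) ^ 2 + c) /
      (x (Fin.castSucc (⟨q - 1, by omega⟩ : Fin p)) ^ 2 + c) ≤ (δ ^ 2 + c) / (a ^ 2 / 4) :=
    div_le_div₀ (by positivity) (by linarith) hQ4 (by linarith)
  intro i hi
  have hival : (i : ℕ) ≠ q - 1 := by
    intro h; exact hi (Fin.ext (by simpa using h))
  have hisucc : ((Fin.succ i : Fin (p+1)) : ℕ) = (i : ℕ) + 1 := Fin.val_succ i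
  have hicast : ((Fin.castSucc i : Fin (p+1)) : ℕ) = (i : ℕ) := Fin.coe_castSucc i
  rcases lt_or_ge (i : ℕ) (q - 1) with hcase | hcase
  · -- i < q - 1
    have hnumi : a ^ 2 / 4 ≤ x (Fin.succ i) ^ 2 := hsq_low _ (by omega)
    have hdeni : x (Fin.castSucc i) ^ 2 ≤ L ^ 2 := hsq_high _ (by omega)
    have hKle : a ^ 2 / 4 / (L ^ 2 + 1) ≤
        (x (Fin.succ i) ^ 2 + c) / (x (Fin.castSucc i) ^ 2 + c) :=
      div_le_div₀ (by positivity) (by linarith) (by positivity) (by linarith)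
    calc (x (Fin.succ (⟨q - 1, by omega⟩ : Fin p)) ^ 2 + c) /
          (x (Fin.castSucc (⟨q - 1, by omega⟩ : Fin p)) ^ 2 + c)
        ≤ (δ ^ 2 + c) / (a ^ 2 / 4) := hRstar
      _ < a ^ 2 / 4 / (L ^ 2 + 1) := hU1
      _ ≤ _ := hKle
  · -- q ≤ i
    have hiq : q ≤ (i : ℕ) := by omega
    have hdeni : x (Fin.castSucc i) ^ 2 ≤ δ ^ 2 := hsmall _ (by omega)
    have hKle : c / (δ ^ 2 + c) ≤
        (x (Fin.succ i) ^ 2 + c) / (x (Fin.castSucc i) ^ 2 + c) :=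
      div_le_div₀ (by positivity) (by nlinarith [sq_nonneg (x (Fin.succ i))])
        (by positivity) (by linarith)
    have hpos1 : (0:ℝ) < δ ^ 2 + c := by positivity
    have hU2' : (δ ^ 2 + c) / (a ^ 2 / 4) < c / (δ ^ 2 + c) := by
      rw [div_lt_div_iff₀ hQ4 hpos1]
      linarith [hU2, pow_two (δ ^ 2 + c)]
    calc (x (Fin.succ (⟨q - 1, by omega⟩ : Fin p)) ^ 2 + c) /
          (x (Fin.castSucc (⟨q - 1, by omega⟩ : Fin p)) ^ 2 + c)
        ≤ (δ ^ 2 + c) / (a ^ 2 / 4) := hRstar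
      _ < c / (δ ^ 2 + c) := hU2'
      _ ≤ _ := hKle
/-- eigenvalue-ratio consistency of the MRER estimator. If the true eigenvalues
satisfy `λ₁ ≥ … ≥ λ_q > 0 = λ_{q+1} = … = λ_{p+1}` (0-based index `i` stores `λ_{i+1}`),
the estimates satisfy `max_i |λ̂ᵢ − λᵢ| = O_p(n^{-1/2})`, `λ̂_{p+1} = 0`, and
`c_n = log n / n`, then with probability tending to one the index `q` is the (unique, strict)
minimizer of `i ↦ (λ̂²_{i+1} + c_n)/(λ̂²_i + c_n)`, i.e. `P(q̂ = q) → 1`. -/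
theorem stmt10 {Ω : Type*} [MeasurableSpace Ω] (μ : Measure Ω) [IsProbabilityMeasure μ]
    (p q : ℕ) (hq1 : 1 ≤ q) (hqp : q < p)
    (lam : Fin (p + 1) → ℝ)
    (hmono : ∀ i j : Fin (p + 1), i ≤ j → lam j ≤ lam i)
    (hqpos : 0 < lam ⟨q - 1, by omega⟩)
    (hzero : ∀ i : Fin (p + 1), q ≤ (i : ℕ) → lam i = 0)
    (lamHat : ℕ → Ω → Fin (p + 1) → ℝ)
    (hmeas : ∀ n i, Measurable fun ω => lamHat n ω i)
    (hlast : ∀ n ω, lamHat n ω ⟨p, by omega⟩ = 0)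
    (hrate : ∀ ε : ℝ, 0 < ε → ∃ M : ℝ, ∀ n : ℕ, 1 ≤ n →
      (μ {ω | ∃ i, M * (n:ℝ) ^ (-(1/2 : ℝ)) < |lamHat n ω i - lam i|}).toReal ≤ ε) :
    Tendsto
      (fun n : ℕ =>
        μ {ω | ∀ i : Fin p, i ≠ (⟨q - 1, by omega⟩ : Fin p) →
          ((lamHat n ω (Fin.succ (⟨q - 1, by omega⟩ : Fin p))) ^ 2 + Real.log n / n) /
              ((lamHat n ω (Fin.castSucc (⟨q - 1, by omega⟩ : Fin p))) ^ 2 + Real.log n / n)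
            <
          ((lamHat n ω (Fin.succ i)) ^ 2 + Real.log n / n) /
              ((lamHat n ω (Fin.castSucc i)) ^ 2 + Real.log n / n)})
      atTop (nhds 1) := by
  rw [ENNReal.tendsto_nhds (by norm_num : (1:ℝ≥0∞) ≠ ⊤)]
  intro ε hε
  set a := lam ⟨q - 1, by omega⟩ with ha_def
  have ha : 0 < a := hqpos
  set L := lam ⟨0, by omega⟩ + a with hL_def
  have hmin_ne_top : min ε 1 ≠ ⊤ :=
    ne_top_of_le_ne_top (by norm_num) (min_le_right _ _)
  have hmin_pos : 0 < min ε 1 := lt_min hε (by norm_num)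
  set ε' : ℝ := (min ε 1).toReal with hε'def
  have hε'pos : 0 < ε' := ENNReal.toReal_pos hmin_pos.ne' hmin_ne_top
  obtain ⟨M, hM⟩ := hrate ε' hε'pos
  set M' : ℝ := max M 1 with hM'def
  have hM'pos : (0:ℝ) < M' := lt_of_lt_of_le one_pos (le_max_right _ _)
  have hMM' : M ≤ M' := le_max_left _ _
  have T1 : Tendsto (fun n : ℕ => M' * (n:ℝ) ^ (-(1/2 : ℝ))) atTop (𝓝 0) := by
    have h := (tendsto_rpow_neg_atTop (by norm_num : (0:ℝ) < 1/2)).comp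
      (tendsto_natCast_atTop_atTop (R := ℝ))
    simpa using h.const_mul M'
  have T2 : Tendsto (fun n : ℕ => M' ^ 2 / (n:ℝ)) atTop (𝓝 0) :=
    tendsto_const_div_atTop_nhds_zero_nat _
  have T3 : Tendsto (fun n : ℕ => Real.log n / (n:ℝ)) atTop (𝓝 0) :=
    Real.isLittleO_log_id_atTop.tendsto_div_nhds_zero.comp
      (tendsto_natCast_atTop_atTop (R := ℝ))
  have T4 : Tendsto (fun n : ℕ => Real.log n) atTop atTop :=
    Real.tendsto_log_atTop.comp (tendsto_natCast_atTop_atTop (R := ℝ))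
  have hK : (0:ℝ) < a ^ 2 / 4 / (L ^ 2 + 1) := by positivity
  have EB : ∀ᶠ n : ℕ in atTop, M' * (n:ℝ) ^ (-(1/2:ℝ)) ≤ a / 2 :=
    T1.eventually (eventually_le_nhds (by positivity))
  have EC : ∀ᶠ n : ℕ in atTop,
      (M' ^ 2 / (n:ℝ) + Real.log n / n) / (a ^ 2 / 4) < a ^ 2 / 4 / (L ^ 2 + 1) := by
    have h0 : Tendsto (fun n : ℕ => (M' ^ 2 / (n:ℝ) + Real.log n / n) / (a ^ 2 / 4))
        atTop (𝓝 0) := by simpa using (T2.add T3).div_const (a ^ 2 / 4)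
    exact h0.eventually (eventually_lt_nhds hK)
  have ED : ∀ᶠ n : ℕ in atTop, M' ^ 2 ≤ Real.log n := T4.eventually_ge_atTop _
  have EE : ∀ᶠ n : ℕ in atTop, Real.log n / (n:ℝ) < a ^ 2 / 16 :=
    T3.eventually (eventually_lt_nhds (by positivity))
  filter_upwards [EB, EC, ED, EE, eventually_ge_atTop 2] with n hB hC hD hE hn2
  have hn1 : (1:ℝ) < (n:ℝ) := by exact_mod_cast Nat.lt_of_lt_of_le one_lt_two hn2
  have hnpos : (0:ℝ) < (n:ℝ) := by linarith
  have hc : (0:ℝ) < Real.log n / n := div_pos (Real.log_pos hn1) hnpos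
  have hc1 : Real.log n / (n:ℝ) ≤ 1 := by
    rw [div_le_one hnpos]
    linarith [Real.log_le_sub_one_of_pos (by linarith : (0:ℝ) < (n:ℝ))]
  set t : ℝ := (n:ℝ) ^ (-(1/2:ℝ)) with ht_def
  have ht0 : 0 ≤ t := Real.rpow_nonneg (by positivity) _
  have hδsq : (M' * t) ^ 2 = M' ^ 2 / (n:ℝ) := by
    have h2 : t ^ 2 = (n:ℝ) ^ (-(1:ℝ)) := by
      rw [ht_def, ← Real.rpow_natCast ((n:ℝ) ^ (-(1/2:ℝ))) 2,
        ← Real.rpow_mul (by positivity)]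
      norm_num
    rw [mul_pow, h2, Real.rpow_neg_one]
    ring
  have hU1 : ((M' * t) ^ 2 + Real.log n / n) / (a ^ 2 / 4)
      < a ^ 2 / 4 / (L ^ 2 + 1) := by rw [hδsq]; exact hC
  have hU2 : ((M' * t) ^ 2 + Real.log n / n) ^ 2 < (Real.log n / n) * (a ^ 2 / 4) := by
    rw [hδsq]
    have h1 : M' ^ 2 / (n:ℝ) ≤ Real.log n / n :=
      (div_le_div_iff_of_pos_right hnpos).2 hD
    have h2 : (0:ℝ) ≤ M' ^ 2 / (n:ℝ) := by positivity
    nlinarith [mul_nonneg (sub_nonneg.2 h1)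
        (by positivity : (0:ℝ) ≤ M' ^ 2 / (n:ℝ) + 3 * (Real.log n / n)),
      mul_pos hc (sub_pos.2 hE)]
  set G : Set Ω := {ω | ∀ i, |lamHat n ω i - lam i| ≤ M' * t} with hG_def
  have hsub : G ⊆ {ω | ∀ i : Fin p, i ≠ (⟨q - 1, by omega⟩ : Fin p) →
          ((lamHat n ω (Fin.succ (⟨q - 1, by omega⟩ : Fin p))) ^ 2 + Real.log n / n) /
              ((lamHat n ω (Fin.castSucc (⟨q - 1, by omega⟩ : Fin p))) ^ 2 + Real.log n / n)
            <
          ((lamHat n ω (Fin.succ i)) ^ 2 + Real.log n / n) /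
              ((lamHat n ω (Fin.castSucc i)) ^ 2 + Real.log n / n)} := by
    intro ω hω
    exact ratio_key hqp hq1 lam hmono hqpos hzero (lamHat n ω) (Real.log n / n) (M' * t)
      hc hc1 (mul_nonneg hM'pos.le ht0) hB hω hU1 hU2
  refine ⟨?_, le_trans prob_le_one le_self_add⟩
  have hGc : Gᶜ ⊆ {ω | ∃ i, M * (n:ℝ) ^ (-(1/2:ℝ)) < |lamHat n ω i - lam i|} := by
    intro ω hω
    simp only [hG_def, Set.mem_compl_iff, Set.mem_setOf_eq, not_forall, not_le] at hω
    obtain ⟨i, hi⟩ := hω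
    exact ⟨i, lt_of_le_of_lt (mul_le_mul_of_nonneg_right hMM' ht0) hi⟩
  have hbad : μ Gᶜ ≤ ε := by
    have h3 : μ {ω | ∃ i, M * (n:ℝ) ^ (-(1/2:ℝ)) < |lamHat n ω i - lam i|}
        ≤ ENNReal.ofReal ε' := by
      rw [← ENNReal.ofReal_toReal (measure_ne_top μ _)]
      exact ENNReal.ofReal_le_ofReal (hM n (by omega))
    calc μ Gᶜ ≤ ENNReal.ofReal ε' := (measure_mono hGc).trans h3
      _ = min ε 1 := ENNReal.ofReal_toReal hmin_ne_top
      _ ≤ ε := min_le_left _ _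
  have hone : (1:ℝ≥0∞) ≤ μ G + μ Gᶜ := by
    rw [← measure_univ (μ := μ), ← Set.union_compl_self G]
    exact measure_union_le _ _
  calc (1:ℝ≥0∞) - ε ≤ 1 - μ Gᶜ := tsub_le_tsub_left hbad 1
    _ ≤ μ G := tsub_le_iff_right.2 hone
    _ ≤ _ := measure_mono hsub
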